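/- (Proposition 2: Golay expansion of a ULA preserves the radiation pattern.) Let N, M ≥ 1, let (u, v) be a Golay complementary pair of unimodular sequences of length N, and let w_PA, w_PB : {0,…,M−1} → ℂ be arbitrary sequences. Define sequences w_A, w_B of length 2NM by: for 0 ≤ l ≤ N−1 and 0 ≤ m ≤ M−1, w_A(lM+m) = u(l)·w_PA(m), w_A(NM+lM+m) = −v(l)·conj(w_PB(M−1−m)), w_B(lM+m) = u(l)·w_PB(m), w_B(NM+lM+m) = v(l)·conj(w_PA(M−1−m)). Then for every ψ ∈ ℝ, |F_{w_A}(ψ)|² + |F_{w_B}(ψ)|² = 2N·( |F_{w_PA}(ψ)|² + |F_{w_PB}(ψ)|² ). -/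

import Mathlib

/-- The array factor of a length-`M` sequence `u` at spatial frequency `ψ`:
`F_u(ψ) = Σ_{m=0}^{M-1} u(m) · exp(i·m·ψ)`. -/
noncomputable def arrayFactor (M : ℕ) (u : ℕ → ℂ) (ψ : ℝ) : ℂ :=
  ∑ m ∈ Finset.range M, u m * Complex.exp (Complex.I * (m : ℂ) * (ψ : ℂ))

/-- The aperiodic autocorrelation of a length-`M` sequence `u` at shift `τ`:
`R_u(τ) = Σ_{m=0}^{M-1-τ} u(m) · conj(u(m+τ))`. -/
noncomputable def aacf (M : ℕ) (u : ℕ → ℂ) (τ : ℕ) : ℂ :=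
  ∑ m ∈ Finset.range (M - τ), u m * (starRingEnd ℂ) (u (m + τ))

open Finset

noncomputable def ee (ψ : ℝ) (n : ℕ) : ℂ := Complex.exp (Complex.I * (n : ℂ) * (ψ : ℂ))

lemma ee_add (ψ : ℝ) (a b : ℕ) : ee ψ (a + b) = ee ψ a * ee ψ b := by
  rw [ee, ee, ee, ← Complex.exp_add]; congr 1; push_cast; ring

lemma ee_mul_conj (ψ : ℝ) (n : ℕ) : ee ψ n * (starRingEnd ℂ) (ee ψ n) = 1 := by
  rw [ee, ← Complex.exp_conj, ← Complex.exp_add]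
  simp only [map_mul, Complex.conj_I, Complex.conj_ofReal, map_natCast]
  rw [show Complex.I * n * ψ + -Complex.I * n * ψ = 0 by ring, Complex.exp_zero]

lemma ee_sub_eq (ψ : ℝ) {m M : ℕ} (h : m < M) :
    ee ψ (M - 1 - m) = ee ψ (M - 1) * (starRingEnd ℂ) (ee ψ m) := by
  have h1 : ee ψ (M - 1 - m) * ee ψ m = ee ψ (M - 1) := by
    rw [← ee_add]; congr 1; omega
  calc ee ψ (M - 1 - m) = ee ψ (M - 1 - m) * (ee ψ m * (starRingEnd ℂ) (ee ψ m)) := by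
        rw [ee_mul_conj, mul_one]
    _ = (ee ψ (M - 1 - m) * ee ψ m) * (starRingEnd ℂ) (ee ψ m) := by ring
    _ = _ := by rw [h1]

lemma arrayFactor_eq (M : ℕ) (u : ℕ → ℂ) (ψ : ℝ) :
    arrayFactor M u ψ = ∑ m ∈ range M, u m * ee ψ m := rfl

lemma aux_reflect (ψ : ℝ) (M : ℕ) (w : ℕ → ℂ) :
    ∑ m ∈ range M, (starRingEnd ℂ) (w (M - 1 - m)) * ee ψ m
      = ee ψ (M - 1) * (starRingEnd ℂ) (∑ m ∈ range M, w m * ee ψ m) := by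
  have key := Finset.sum_range_reflect (fun m => (starRingEnd ℂ) (w m) * ee ψ (M - 1 - m)) M
  rw [show (∑ m ∈ range M, (starRingEnd ℂ) (w (M - 1 - m)) * ee ψ m)
      = ∑ j ∈ range M, (starRingEnd ℂ) (w (M - 1 - j)) * ee ψ (M - 1 - (M - 1 - j)) from
    Finset.sum_congr rfl fun j hj => by
      have hj' := Finset.mem_range.mp hj
      rw [Nat.sub_sub_self (by omega : j ≤ M - 1)]]
  rw [key, map_sum, Finset.mul_sum]
  refine Finset.sum_congr rfl fun m hm => ?_
  rw [ee_sub_eq ψ (Finset.mem_range.mp hm), map_mul]; ring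

lemma aux_sum_range_mul {β : Type*} [AddCommMonoid β] (f : ℕ → β) (N M : ℕ) :
    ∑ n ∈ range (N * M), f n = ∑ l ∈ range N, ∑ m ∈ range M, f (l * M + m) := by
  induction N with
  | zero => simp
  | succ n ih => rw [Nat.succ_mul, Finset.sum_range_add, ih, Finset.sum_range_succ]

lemma aux_tri (N : ℕ) (g : ℕ → ℕ → ℂ) :
    ∑ a ∈ range N, ∑ b ∈ range a, g a b
      = ∑ τ ∈ Finset.Ico 1 N, ∑ m ∈ range (N - τ), g (m + τ) m := by
  rw [Finset.sum_sigma', Finset.sum_sigma']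
  apply Finset.sum_nbij' (fun x => (⟨x.1 - x.2, x.2⟩ : (_ : ℕ) × ℕ))
    (fun y => (⟨y.2 + y.1, y.2⟩ : (_ : ℕ) × ℕ))
  · intro a ha; simp only [Finset.mem_sigma, Finset.mem_range, Finset.mem_Ico] at *; omega
  · intro a ha; simp only [Finset.mem_sigma, Finset.mem_range, Finset.mem_Ico] at *; omega
  · intro a ha; simp only [Finset.mem_sigma, Finset.mem_range, Finset.mem_Ico] at *
    ext <;> simp <;> omega
  · intro a ha; simp only [Finset.mem_sigma, Finset.mem_range, Finset.mem_Ico] at *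
    ext <;> simp <;> omega
  · intro a ha; simp only [Finset.mem_sigma, Finset.mem_range, Finset.mem_Ico] at *
    congr 1 <;> omega

lemma aux_double_split (N : ℕ) (g : ℕ → ℕ → ℂ) :
    ∑ a ∈ range N, ∑ b ∈ range N, g a b
      = ∑ a ∈ range N, g a a + (∑ a ∈ range N, ∑ b ∈ range a, g a b)
        + (∑ a ∈ range N, ∑ b ∈ range a, g b a) := by
  have h : ∀ a ∈ range N, ∑ b ∈ range N, g a b
      = g a a + (∑ b ∈ range a, g a b) + ∑ b ∈ Finset.Ico (a+1) N, g a b := by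
    intro a ha
    rw [Finset.range_eq_Ico, ← Finset.sum_Ico_consecutive (fun b => g a b)
      (Nat.zero_le a) (Finset.mem_range.mp ha).le,
      Finset.sum_eq_sum_Ico_succ_bot (Finset.mem_range.mp ha) (fun b => g a b)]
    rw [← Finset.range_eq_Ico]; ring
  rw [Finset.sum_congr rfl h, Finset.sum_add_distrib, Finset.sum_add_distrib]
  congr 1
  rw [Finset.sum_sigma', Finset.sum_sigma']
  apply Finset.sum_nbij' (fun x => (⟨x.2, x.1⟩ : (_ : ℕ) × ℕ))
    (fun y => (⟨y.2, y.1⟩ : (_ : ℕ) × ℕ)) <;>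
    intro a ha <;>
    simp only [Finset.mem_sigma, Finset.mem_range, Finset.mem_Ico] at * <;> omega

lemma aux_expand (ψ : ℝ) (N M : ℕ) (x y p q W : ℕ → ℂ) (s : ℂ)
    (h1 : ∀ l < N, ∀ m < M, W (l * M + m) = x l * p m)
    (h2 : ∀ l < N, ∀ m < M,
      W (N * M + l * M + m) = s * (y l * (starRingEnd ℂ) (q (M - 1 - m)))) :
    arrayFactor (2 * N * M) W ψ
      = (∑ l ∈ range N, x l * ee ψ (l * M)) * arrayFactor M p ψ
        + s * (ee ψ (N * M) * ee ψ (M - 1)) * (∑ l ∈ range N, y l * ee ψ (l * M))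
          * (starRingEnd ℂ) (arrayFactor M q ψ) := by
  rw [arrayFactor_eq, show 2 * N * M = N * M + N * M by ring, Finset.sum_range_add,
    aux_sum_range_mul (fun n => W n * ee ψ n) N M,
    aux_sum_range_mul (fun n => W (N * M + n) * ee ψ (N * M + n)) N M]
  have hfirst : ∑ l ∈ range N, ∑ m ∈ range M, W (l * M + m) * ee ψ (l * M + m)
      = (∑ l ∈ range N, x l * ee ψ (l * M)) * (∑ m ∈ range M, p m * ee ψ m) := by
    rw [Finset.sum_mul_sum]
    refine Finset.sum_congr rfl fun l hl => Finset.sum_congr rfl fun m hm => ?_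
    rw [h1 l (mem_range.mp hl) m (mem_range.mp hm), ee_add]; ring
  have hstep : ∀ l ∈ range N,
      ∑ m ∈ range M, W (N * M + (l * M + m)) * ee ψ (N * M + (l * M + m))
        = (s * ee ψ (N * M) * (y l * ee ψ (l * M)))
          * ∑ m ∈ range M, (starRingEnd ℂ) (q (M - 1 - m)) * ee ψ m := by
    intro l hl
    rw [Finset.mul_sum]
    refine Finset.sum_congr rfl fun m hm => ?_
    rw [show N * M + (l * M + m) = N * M + l * M + m by ring,
      h2 l (mem_range.mp hl) m (mem_range.mp hm),
      show N * M + l * M + m = (N * M + l * M) + m by ring, ee_add, ee_add]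
    ring
  have hsecond : ∑ l ∈ range N, ∑ m ∈ range M,
        W (N * M + (l * M + m)) * ee ψ (N * M + (l * M + m))
      = s * (ee ψ (N * M) * ee ψ (M - 1)) * (∑ l ∈ range N, y l * ee ψ (l * M))
          * (starRingEnd ℂ) (∑ m ∈ range M, q m * ee ψ m) := by
    rw [Finset.sum_congr rfl hstep, ← Finset.sum_mul, aux_reflect ψ M q, ← Finset.mul_sum]
    ring
  rw [hfirst, hsecond, arrayFactor_eq, arrayFactor_eq]

lemma aux_twoN (ψ : ℝ) (N M : ℕ) (u v : ℕ → ℂ)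
    (hu : ∀ l < N, ‖u l‖ = 1) (hv : ∀ l < N, ‖v l‖ = 1)
    (hGolay : ∀ τ, 1 ≤ τ → τ < N → aacf N u τ + aacf N v τ = 0) :
    (∑ l ∈ range N, u l * ee ψ (l * M))
        * (starRingEnd ℂ) (∑ l ∈ range N, u l * ee ψ (l * M))
      + (∑ l ∈ range N, v l * ee ψ (l * M))
        * (starRingEnd ℂ) (∑ l ∈ range N, v l * ee ψ (l * M)) = 2 * N := by
  set g : ℕ → ℕ → ℂ := fun a b =>
    (u a * (starRingEnd ℂ) (u b) + v a * (starRingEnd ℂ) (v b))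
      * (ee ψ (a * M) * (starRingEnd ℂ) (ee ψ (b * M))) with hg
  have lhs_eq : (∑ l ∈ range N, u l * ee ψ (l * M))
        * (starRingEnd ℂ) (∑ l ∈ range N, u l * ee ψ (l * M))
      + (∑ l ∈ range N, v l * ee ψ (l * M))
        * (starRingEnd ℂ) (∑ l ∈ range N, v l * ee ψ (l * M))
      = ∑ a ∈ range N, ∑ b ∈ range N, g a b := by
    rw [map_sum, map_sum, Finset.sum_mul_sum, Finset.sum_mul_sum, ← Finset.sum_add_distrib]
    refine Finset.sum_congr rfl fun a _ => ?_
    rw [← Finset.sum_add_distrib]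
    refine Finset.sum_congr rfl fun b _ => ?_
    simp only [hg, map_mul]; ring
  rw [lhs_eq, aux_double_split]
  have hdiag : ∑ a ∈ range N, g a a = 2 * N := by
    have : ∀ a ∈ range N, g a a = 2 := by
      intro a ha
      have h1 : u a * (starRingEnd ℂ) (u a) = 1 := by
        rw [Complex.mul_conj, Complex.normSq_eq_norm_sq, hu a (mem_range.mp ha)]; norm_num
      have h2 : v a * (starRingEnd ℂ) (v a) = 1 := by
        rw [Complex.mul_conj, Complex.normSq_eq_norm_sq, hv a (mem_range.mp ha)]; norm_num
      rw [hg]; simp only []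
      rw [h1, h2, ee_mul_conj]; norm_num
    rw [Finset.sum_congr rfl this, Finset.sum_const, card_range, nsmul_eq_mul]; ring
  have hee : ∀ τ m : ℕ, ee ψ ((m + τ) * M) * (starRingEnd ℂ) (ee ψ (m * M))
      = ee ψ (τ * M) := by
    intro τ m
    rw [show (m + τ) * M = m * M + τ * M by ring, ee_add]
    linear_combination ee ψ (τ * M) * ee_mul_conj ψ (m * M)
  have hupper : ∑ a ∈ range N, ∑ b ∈ range a, g a b = 0 := by
    rw [aux_tri]
    refine Finset.sum_eq_zero fun τ hτ => ?_
    obtain ⟨hτ1, hτ2⟩ := Finset.mem_Ico.mp hτ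
    have inner : ∑ m ∈ range (N - τ), g (m + τ) m
        = ee ψ (τ * M) * (starRingEnd ℂ) (aacf N u τ + aacf N v τ) := by
      rw [aacf, aacf, map_add, map_sum, map_sum, ← Finset.sum_add_distrib, Finset.mul_sum]
      refine Finset.sum_congr rfl fun m _ => ?_
      have := hee τ m
      simp only [hg, map_mul, Complex.conj_conj]
      linear_combination (u (m + τ) * (starRingEnd ℂ) (u m)
        + v (m + τ) * (starRingEnd ℂ) (v m)) * this
    rw [inner, hGolay τ hτ1 hτ2, map_zero, mul_zero]
  have hlower : ∑ a ∈ range N, ∑ b ∈ range a, g b a = 0 := by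
    rw [aux_tri N (fun a b => g b a)]
    refine Finset.sum_eq_zero fun τ hτ => ?_
    obtain ⟨hτ1, hτ2⟩ := Finset.mem_Ico.mp hτ
    have inner : ∑ m ∈ range (N - τ), g m (m + τ)
        = (starRingEnd ℂ) (ee ψ (τ * M)) * (aacf N u τ + aacf N v τ) := by
      rw [aacf, aacf, ← Finset.sum_add_distrib, Finset.mul_sum]
      refine Finset.sum_congr rfl fun m _ => ?_
      have h3 : ee ψ (m * M) * (starRingEnd ℂ) (ee ψ ((m + τ) * M))
          = (starRingEnd ℂ) (ee ψ (τ * M)) := by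
        rw [show (m + τ) * M = m * M + τ * M by ring, ee_add, map_mul]
        linear_combination (starRingEnd ℂ) (ee ψ (τ * M)) * ee_mul_conj ψ (m * M)
      simp only [hg]
      linear_combination (u m * (starRingEnd ℂ) (u (m + τ))
        + v m * (starRingEnd ℂ) (v (m + τ))) * h3
    rw [inner, hGolay τ hτ1 hτ2, mul_zero]
  rw [hdiag, hupper, hlower]; ring

/-- Proposition 2: expansion of a ULA by a Golay complementary pair of expanders
preserves (up to the scaling `2N`) the sum power pattern of the protoarray. -/
theorem golay_expansion_preserves_pattern (N M : ℕ) (hN : 1 ≤ N) (hM : 1 ≤ M)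
    (u v wPA wPB wA wB : ℕ → ℂ)
    (hu : ∀ l < N, ‖u l‖ = 1) (hv : ∀ l < N, ‖v l‖ = 1)
    (hGolay : ∀ τ, 1 ≤ τ → τ < N → aacf N u τ + aacf N v τ = 0)
    (hA1 : ∀ l < N, ∀ m < M, wA (l * M + m) = u l * wPA m)
    (hA2 : ∀ l < N, ∀ m < M,
      wA (N * M + l * M + m) = -(v l * (starRingEnd ℂ) (wPB (M - 1 - m))))
    (hB1 : ∀ l < N, ∀ m < M, wB (l * M + m) = u l * wPB m)
    (hB2 : ∀ l < N, ∀ m < M,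
      wB (N * M + l * M + m) = v l * (starRingEnd ℂ) (wPA (M - 1 - m)))
    (ψ : ℝ) :
    ‖arrayFactor (2 * N * M) wA ψ‖ ^ 2 +
        ‖arrayFactor (2 * N * M) wB ψ‖ ^ 2 =
      2 * N * (‖arrayFactor M wPA ψ‖ ^ 2 +
                ‖arrayFactor M wPB ψ‖ ^ 2) := by
  set U := ∑ l ∈ range N, u l * ee ψ (l * M) with hU
  set V := ∑ l ∈ range N, v l * ee ψ (l * M) with hV
  set P := arrayFactor M wPA ψ with hP
  set Q := arrayFactor M wPB ψ with hQ
  set d : ℂ := ee ψ (N * M) * ee ψ (M - 1) with hd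
  have hdd : d * (starRingEnd ℂ) d = 1 := by
    rw [hd, map_mul, mul_mul_mul_comm, ee_mul_conj, ee_mul_conj, one_mul]
  have hFA : arrayFactor (2 * N * M) wA ψ = U * P + (-1) * d * V * (starRingEnd ℂ) Q := by
    have := aux_expand ψ N M u v wPA wPB wA (-1) hA1 (fun l hl m hm => by
      rw [hA2 l hl m hm]; ring)
    linear_combination this
  have hFB : arrayFactor (2 * N * M) wB ψ = U * Q + d * V * (starRingEnd ℂ) P := by
    have := aux_expand ψ N M u v wPB wPA wB 1 hB1 (fun l hl m hm => by
      rw [hB2 l hl m hm]; ring)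
    linear_combination this
  have h2N : U * (starRingEnd ℂ) U + V * (starRingEnd ℂ) V = 2 * N :=
    aux_twoN ψ N M u v hu hv hGolay
  have key : arrayFactor (2 * N * M) wA ψ * (starRingEnd ℂ) (arrayFactor (2 * N * M) wA ψ)
      + arrayFactor (2 * N * M) wB ψ * (starRingEnd ℂ) (arrayFactor (2 * N * M) wB ψ)
      = 2 * N * (P * (starRingEnd ℂ) P + Q * (starRingEnd ℂ) Q) := by
    rw [hFA, hFB]
    simp only [map_add, map_mul, map_neg, map_one, Complex.conj_conj]
    calc (U * P + (-1) * d * V * (starRingEnd ℂ) Q)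
          * ((starRingEnd ℂ) U * (starRingEnd ℂ) P
            + -1 * (starRingEnd ℂ) d * (starRingEnd ℂ) V * Q)
        + (U * Q + d * V * (starRingEnd ℂ) P)
          * ((starRingEnd ℂ) U * (starRingEnd ℂ) Q + (starRingEnd ℂ) d * (starRingEnd ℂ) V * P)
        = (U * (starRingEnd ℂ) U + V * (starRingEnd ℂ) V)
            * (P * (starRingEnd ℂ) P + Q * (starRingEnd ℂ) Q) := by
          linear_combination ((starRingEnd ℂ) V * V * ((starRingEnd ℂ) Q * Q
            + (starRingEnd ℂ) P * P)) * hdd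
      _ = _ := by rw [h2N]
  have cast_eq : ∀ z : ℂ, z * (starRingEnd ℂ) z = (‖z‖ ^ 2 : ℝ) := by
    intro z
    rw [Complex.mul_conj, Complex.sq_norm]
  rw [cast_eq, cast_eq, cast_eq, cast_eq] at key
  exact_mod_cast key
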